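/- Let f : K → L be a surjective group homomorphism such that the induced map f̂ : K̂ → L̂ on profinite completions is injective. Then for every group homomorphism ρ : K → G with G residually finite, there exists a (unique) homomorphism τ : L → G with ρ = τ ∘ f. -/

import Mathlib

/-- A finite-index normal subgroup of `G`. -/
structure FinIndexNormal (G : Type*) [Group G] where
  toSubgroup : Subgroup G
  normal : toSubgroup.Normal
  finiteIndex : toSubgroup.FiniteIndex

attribute [instance] FinIndexNormal.normal FinIndexNormal.finiteIndex

/-- The profinite completion of a group `G`: the inverse limit of the quotients `G/N`
over all finite-index normal subgroups `N` of `G`, realised as the subgroup of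
compatible families inside the product of all these quotients. -/
def ProfiniteCompletion (G : Type*) [Group G] :
    Subgroup (∀ M : FinIndexNormal G, G ⧸ M.toSubgroup) where
  carrier := { x | ∀ (M M' : FinIndexNormal G) (h : M.toSubgroup ≤ M'.toSubgroup),
      QuotientGroup.map M.toSubgroup M'.toSubgroup (MonoidHom.id G)
        (fun _ hg => h hg) (x M) = x M' }
  one_mem' := by intro M M' h; simp
  mul_mem' := by
    intro a b ha hb M M' h
    simp only [Pi.mul_apply, map_mul, ha M M' h, hb M M' h]
  inv_mem' := by
    intro a ha M M' h
    simp only [Pi.inv_apply, map_inv, ha M M' h]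

/-- The natural map from a group to its profinite completion. -/
def toProfiniteCompletion (G : Type*) [Group G] : G →* ProfiniteCompletion G :=
  (Pi.monoidHom fun M : FinIndexNormal G => QuotientGroup.mk' M.toSubgroup).codRestrict
    (ProfiniteCompletion G) (fun _ _ _ _ => rfl)

/-- Pull back a finite-index normal subgroup along a group homomorphism. -/
def FinIndexNormal.comapHom {G H : Type*} [Group G] [Group H] (φ : G →* H)
    (M : FinIndexNormal H) : FinIndexNormal G :=
  ⟨M.toSubgroup.comap φ, M.normal.comap φ, ⟨by
    rw [Subgroup.index_comap]
    intro h0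
    exact M.finiteIndex.index_ne_zero
      (zero_dvd_iff.mp (h0 ▸ Subgroup.relIndex_dvd_index_of_normal M.toSubgroup φ.range))⟩⟩

/-- The homomorphism between profinite completions functorially induced by a group
homomorphism `φ : G →* H`. -/
def ProfiniteCompletion.map {G H : Type*} [Group G] [Group H] (φ : G →* H) :
    ProfiniteCompletion G →* ProfiniteCompletion H :=
  (Pi.monoidHom fun M : FinIndexNormal H =>
      (QuotientGroup.map ((M.comapHom φ).toSubgroup) M.toSubgroup φ le_rfl).comp
        ((Pi.evalMonoidHom _ (M.comapHom φ)).comp (ProfiniteCompletion G).subtype)).codRestrict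
    (ProfiniteCompletion H) (by
      intro x M M' h
      have hx := x.2 (M.comapHom φ) (M'.comapHom φ)
        (Subgroup.comap_mono (f := φ) h)
      simp only [Pi.monoidHom, MonoidHom.pi_apply, MonoidHom.comp_apply,
        Pi.evalMonoidHom_apply, Subgroup.coe_subtype] at *
      rw [← hx]
      obtain ⟨g, hg⟩ := QuotientGroup.mk'_surjective (M.comapHom φ).toSubgroup
        (x.1 (M.comapHom φ))
      rw [← hg]
      rfl)

/-- If f : K -> L is a surjective group homomorphism inducing an injective map on
profinite completions, then every homomorphism from K to a residually finite group G
factors (uniquely) through f. -/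
theorem exists_unique_factorization_of_surjective_of_injective_profiniteCompletion_map
    {K L G : Type*} [Group K] [Group L] [Group G]
    (f : K →* L) (hf : Function.Surjective f)
    (hfhat : Function.Injective (ProfiniteCompletion.map f))
    (hG : Function.Injective (toProfiniteCompletion G))
    (ρ : K →* G) :
    ∃! τ : L →* G, τ.comp f = ρ := by
  have hker : f.ker ≤ ρ.ker := by
    intro k hk
    have hfk : f k = 1 := hk
    have hnat : ProfiniteCompletion.map f (toProfiniteCompletion K k)
        = toProfiniteCompletion L (f k) := rfl
    have h1 : toProfiniteCompletion K k = 1 := by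
      apply hfhat
      rw [hnat, hfk, map_one, map_one]
    have hall : ∀ M : FinIndexNormal K, k ∈ M.toSubgroup := by
      intro M
      have h2 := congrFun (congrArg Subtype.val h1) M
      exact (QuotientGroup.eq_one_iff k).mp h2
    have h3 : toProfiniteCompletion G (ρ k) = 1 := by
      refine Subtype.ext (funext fun M => ?_)
      exact (QuotientGroup.eq_one_iff _).mpr (hall (FinIndexNormal.comapHom ρ M))
    have : ρ k = 1 := hG (by rw [h3, map_one])
    exact this
  let e := QuotientGroup.quotientKerEquivOfSurjective f hf
  let τ : L →* G := (QuotientGroup.lift f.ker ρ hker).comp e.symm.toMonoidHom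
  have hτ : τ.comp f = ρ := by
    ext k
    have he : e.symm (f k) = QuotientGroup.mk k := by
      apply e.injective
      simp only [MulEquiv.apply_symm_apply]
      rfl
    simp only [τ, MonoidHom.comp_apply, MulEquiv.coe_toMonoidHom, he]
    rfl
  refine ⟨τ, hτ, fun τ' hτ' => ?_⟩
  ext l
  obtain ⟨k, rfl⟩ := hf l
  exact DFunLike.congr_fun (hτ'.trans hτ.symm) k
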